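/- For every fixed positive integer τ and κ > 0, (I_{p+τ}(κ) − I_{p−τ}(κ))/(I_p(κ) p^τ) → −2^τ/κ^τ as p → ∞ through the integers. -/

import Mathlib

open Real Filter

/-- The modified Bessel function of the first kind of nonnegative integer order. -/
noncomputable def besselI (p : ℕ) (κ : ℝ) : ℝ :=
  ∑' r : ℕ, (κ / 2) ^ (2 * r + p) / ((p + r).factorial * r.factorial)


lemma besselI_summable (p : ℕ) (κ : ℝ) (hκ : 0 < κ) :
    Summable (fun r : ℕ => (κ / 2) ^ (2 * r + p) / (((p + r).factorial : ℝ) * (r.factorial : ℝ))) := by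
  have hs : Summable (fun r : ℕ => (κ / 2) ^ p * (((κ / 2) ^ 2) ^ r / r.factorial)) :=
    (Real.summable_pow_div_factorial ((κ / 2) ^ 2)).mul_left _
  refine Summable.of_nonneg_of_le (fun r => by positivity) (fun r => ?_) hs
  rw [pow_add, pow_mul, mul_comm (((κ/2)^2)^r), mul_div_assoc]
  gcongr
  have h1 : (1 : ℝ) ≤ ((p + r).factorial : ℝ) := by exact_mod_cast (p + r).factorial_pos
  have h2 : (0 : ℝ) < (r.factorial : ℝ) := by exact_mod_cast r.factorial_pos
  nlinarith

lemma besselI_pos (p : ℕ) (κ : ℝ) (hκ : 0 < κ) : 0 < besselI p κ := by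
  apply Summable.tsum_pos (besselI_summable p κ hκ) (fun r => by positivity) 0
  positivity

lemma besselI_recurrence (p : ℕ) (κ : ℝ) (hκ : 0 < κ) :
    besselI p κ = 2 * (p + 1) / κ * besselI (p + 1) κ + besselI (p + 2) κ := by
  have hA := besselI_summable p κ hκ
  have hB := besselI_summable (p + 1) κ hκ
  have hC := besselI_summable (p + 2) κ hκ
  set A : ℕ → ℝ := fun r => (κ / 2) ^ (2 * r + p) / (((p + r).factorial : ℝ) * (r.factorial : ℝ)) with hAdef
  set C : ℕ → ℝ := fun r => (κ / 2) ^ (2 * r + (p + 2)) / (((p + 2 + r).factorial : ℝ) * (r.factorial : ℝ)) with hCdef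
  set E : ℕ → ℝ := fun r =>
    2 * (p + 1) / κ * ((κ / 2) ^ (2 * r + (p + 1)) / (((p + 1 + r).factorial : ℝ) * (r.factorial : ℝ))) with hEdef
  have hE : Summable E := hB.mul_left _
  have key0 : A 0 = E 0 := by
    simp only [hAdef, hEdef]
    have h1 : ((p + 1).factorial : ℝ) = (p + 1) * (p.factorial : ℝ) := by
      rw [Nat.factorial_succ]; push_cast; ring
    field_simp [h1]
    simp only [Nat.add_zero, Nat.factorial_succ, Nat.cast_mul, Nat.cast_add, Nat.cast_one]
    ring
  have keyS : ∀ r : ℕ, A (r + 1) = E (r + 1) + C r := by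
    intro r
    simp only [hAdef, hEdef, hCdef]
    have e1 : p + (r + 1) = p + r + 1 := by ring
    have e2 : p + 1 + (r + 1) = p + r + 2 := by ring
    have e3 : p + 2 + r = p + r + 2 := by ring
    rw [e1, e2, e3]
    have f1 : ((p + r + 2).factorial : ℝ) = (p + r + 2) * ((p + r + 1).factorial : ℝ) := by
      rw [Nat.factorial_succ]; push_cast; ring
    have f2 : ((r + 1).factorial : ℝ) = (r + 1) * (r.factorial : ℝ) := by
      rw [Nat.factorial_succ]; push_cast; ring
    have p1 : 2 * (r + 1) + p = (2 * r + (p + 1)) + 1 := by ring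
    have p2 : 2 * (r + 1) + (p + 1) = (2 * r + (p + 1)) + 2 := by ring
    have p3 : 2 * r + (p + 2) = (2 * r + (p + 1)) + 1 := by ring
    rw [p1, p2, p3, pow_succ, pow_succ, pow_succ, f1, f2]
    have hfacpos : (0 : ℝ) < ((p + r + 1).factorial : ℝ) := by exact_mod_cast (p + r + 1).factorial_pos
    have hrpos : (0 : ℝ) < (r.factorial : ℝ) := by exact_mod_cast r.factorial_pos
    field_simp
    ring
  have hshift : besselI p κ = A 0 + ∑' r : ℕ, A (r + 1) := (Summable.tsum_eq_zero_add hA)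
  have hsumAS : Summable (fun r : ℕ => A (r + 1)) := by
    exact (summable_nat_add_iff 1).2 hA
  have hsumES : Summable (fun r : ℕ => E (r + 1)) := by
    exact (summable_nat_add_iff 1).2 hE
  calc besselI p κ = A 0 + ∑' r : ℕ, A (r + 1) := hshift
    _ = E 0 + ∑' r : ℕ, (E (r + 1) + C r) := by rw [key0]; congr 1; exact tsum_congr keyS
    _ = E 0 + (∑' r : ℕ, E (r + 1) + ∑' r : ℕ, C r) := by rw [Summable.tsum_add hsumES hC]
    _ = (E 0 + ∑' r : ℕ, E (r + 1)) + ∑' r : ℕ, C r := by ring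
    _ = (∑' r : ℕ, E r) + besselI (p + 2) κ := by rw [Summable.tsum_eq_zero_add hE]; rfl
    _ = 2 * (p + 1) / κ * besselI (p + 1) κ + besselI (p + 2) κ := by
        rw [tsum_mul_left]; rfl

lemma besselI_succ_le (p : ℕ) (κ : ℝ) (hκ : 0 < κ) :
    besselI (p + 1) κ ≤ κ / 2 * besselI p κ := by
  rw [show κ / 2 * besselI p κ = ∑' r : ℕ, κ / 2 * ((κ / 2) ^ (2 * r + p) / (((p + r).factorial : ℝ) * (r.factorial : ℝ))) from (tsum_mul_left).symm]
  refine Summable.tsum_le_tsum (fun r => ?_) (besselI_summable _ κ hκ) ((besselI_summable p κ hκ).mul_left _)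
  have e1 : p + 1 + r = p + r + 1 := by ring
  rw [e1, show 2 * r + (p + 1) = (2 * r + p) + 1 from by ring, pow_succ]
  have f1 : ((p + r + 1).factorial : ℝ) = (p + r + 1) * ((p + r).factorial : ℝ) := by
    rw [Nat.factorial_succ]; push_cast; ring
  rw [f1]
  have h1 : (1 : ℝ) ≤ (p : ℝ) + r + 1 := by
    have : (0:ℝ) ≤ (p:ℝ) + r := by positivity
    linarith
  have hfp : (0 : ℝ) < ((p + r).factorial : ℝ) := by exact_mod_cast (p + r).factorial_pos
  have hrp : (0 : ℝ) < (r.factorial : ℝ) := by exact_mod_cast r.factorial_pos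
  rw [div_le_iff₀ (by positivity)]
  have expand : κ / 2 * ((κ / 2) ^ (2 * r + p) / (↑(p + r).factorial * ↑r.factorial)) * ((↑p + ↑r + 1) * ↑(p + r).factorial * ↑r.factorial) = (κ / 2) ^ (2 * r + p) * (κ / 2) * (↑p + ↑r + 1) := by
    field_simp
  rw [expand]
  nlinarith [mul_pos (pow_pos (by positivity : (0:ℝ) < κ/2) (2*r+p)) (by positivity : (0:ℝ) < κ/2), h1]

lemma besselI_add_le (p τ : ℕ) (κ : ℝ) (hκ : 0 < κ) :
    besselI (p + τ) κ ≤ (κ / 2) ^ τ * besselI p κ := by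
  induction τ with
  | zero => simp
  | succ t ih =>
    calc besselI (p + (t + 1)) κ = besselI ((p + t) + 1) κ := by ring_nf
      _ ≤ κ / 2 * besselI (p + t) κ := besselI_succ_le _ κ hκ
      _ ≤ κ / 2 * ((κ / 2) ^ t * besselI p κ) := by
          have := besselI_pos (p + t) κ hκ
          nlinarith [ih, (by positivity : (0:ℝ) < κ / 2)]
      _ = (κ / 2) ^ (t + 1) * besselI p κ := by ring

lemma aux_limit (κ : ℝ) (hκ : 0 < κ) : ∀ τ : ℕ,
    Tendsto (fun p : ℕ => besselI (p - τ) κ / (besselI p κ * (p : ℝ) ^ τ))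
      atTop (nhds ((2 / κ) ^ τ)) := by
  intro τ
  induction τ with
  | zero =>
    have : (fun p : ℕ => besselI (p - 0) κ / (besselI p κ * (p : ℝ) ^ 0)) = fun p : ℕ => 1 := by
      funext p
      rw [Nat.sub_zero, pow_zero, mul_one, div_self (besselI_pos p κ hκ).ne']
    rw [this, pow_zero]
    exact tendsto_const_nhds
  | succ t ih =>
    have hκ' : κ ≠ 0 := hκ.ne'
    -- the factor a p
    set a : ℕ → ℝ := fun p =>
      2 * ((p - t : ℕ) : ℝ) / (κ * p) + besselI (p - t + 1) κ / (besselI (p - t) κ * p) with hadef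
    have h1 : Tendsto (fun p : ℕ => 2 * ((p - t : ℕ) : ℝ) / (κ * p)) atTop (nhds (2 / κ)) := by
      have ht : Tendsto (fun p : ℕ => 2 / κ * (1 - (t : ℝ) / p)) atTop (nhds (2 / κ * (1 - 0))) :=
        (tendsto_const_nhds.sub (tendsto_const_div_atTop_nhds_zero_nat (t : ℝ))).const_mul _
      rw [sub_zero, mul_one] at ht
      refine ht.congr' ?_
      filter_upwards [eventually_ge_atTop (t + 1)] with p hp
      have hp0 : (p : ℝ) ≠ 0 := Nat.cast_ne_zero.2 (by omega)
      rw [Nat.cast_sub (by omega : t ≤ p)]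
      field_simp
    have h2 : Tendsto (fun p : ℕ => besselI (p - t + 1) κ / (besselI (p - t) κ * p)) atTop (nhds 0) := by
      refine tendsto_of_tendsto_of_tendsto_of_le_of_le'
        (tendsto_const_nhds (x := (0:ℝ)))
        (tendsto_const_div_atTop_nhds_zero_nat (κ / 2)) ?_ ?_
      · filter_upwards with p
        exact div_nonneg (besselI_pos _ κ hκ).le
          (mul_nonneg (besselI_pos _ κ hκ).le (by positivity))
      · filter_upwards [eventually_ge_atTop 1] with p hp
        have hq := besselI_pos (p - t) κ hκ
        have hpp : (0 : ℝ) < (p : ℝ) := by exact_mod_cast hp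
        calc besselI (p - t + 1) κ / (besselI (p - t) κ * p)
            ≤ (κ / 2 * besselI (p - t) κ) / (besselI (p - t) κ * p) := by
              gcongr
              exact besselI_succ_le _ κ hκ
          _ = κ / 2 / p := by
              field_simp
    have ha : Tendsto a atTop (nhds (2 / κ)) := by
      have := h1.add h2
      rw [add_zero] at this
      exact this
    have hmul := ha.mul ih
    rw [← pow_succ'] at hmul
    refine hmul.congr' ?_
    filter_upwards [eventually_ge_atTop (t + 1)] with p hp
    set n := p - (t + 1) with hn
    have e1 : p - t = n + 1 := by omega
    have e2 : p - t + 1 = n + 2 := by omega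
    have hrec := besselI_recurrence n κ hκ
    have hp0 : (p : ℝ) ≠ 0 := Nat.cast_ne_zero.2 (by omega)
    have hIp := (besselI_pos p κ hκ).ne'
    have hIn1 := (besselI_pos (n + 1) κ hκ).ne'
    simp only [hadef, e1, e2]
    rw [hrec, pow_succ]
    push_cast
    field_simp

/-- `(I_{p+τ}(κ) - I_{p-τ}(κ)) / (I_p(κ) p^τ) → -2^τ/κ^τ` as `p → ∞`. -/
theorem besselI_diff_ratio_limit (κ : ℝ) (hκ : 0 < κ) (τ : ℕ) (hτ : 0 < τ) :
    Tendsto (fun p : ℕ => (besselI (p + τ) κ - besselI (p - τ) κ) / (besselI p κ * p ^ τ))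
      atTop (nhds (-(2 ^ τ / κ ^ τ))) := by
  have hupper : Tendsto (fun p : ℕ => besselI (p + τ) κ / (besselI p κ * (p : ℝ) ^ τ))
      atTop (nhds 0) := by
    have hb : Tendsto (fun p : ℕ => ((p : ℝ)) ^ τ) atTop atTop :=
      (tendsto_pow_atTop hτ.ne').comp tendsto_natCast_atTop_atTop
    refine tendsto_of_tendsto_of_tendsto_of_le_of_le'
      (tendsto_const_nhds (x := (0:ℝ)))
      (Tendsto.div_atTop (tendsto_const_nhds (x := (κ/2)^τ)) hb) ?_ ?_
    · filter_upwards with p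
      exact div_nonneg (besselI_pos _ κ hκ).le
        (mul_nonneg (besselI_pos _ κ hκ).le (by positivity))
    · filter_upwards [eventually_ge_atTop 1] with p hp
      have hIp := besselI_pos p κ hκ
      have hpp : (0 : ℝ) < (p : ℝ) := by exact_mod_cast hp
      calc besselI (p + τ) κ / (besselI p κ * (p : ℝ) ^ τ)
          ≤ ((κ / 2) ^ τ * besselI p κ) / (besselI p κ * (p : ℝ) ^ τ) := by
            gcongr
            exact besselI_add_le p τ κ hκ
        _ = (κ / 2) ^ τ / (p : ℝ) ^ τ := by
            field_simp
  have hlow := aux_limit κ hκ τ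
  have hmain := hupper.sub hlow
  rw [zero_sub, div_pow] at hmain
  exact hmain.congr (fun p => (sub_div _ _ _).symm)
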